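/- (Signal lower bound on the descent direction.) Let U, Û ∈ ℝ^{n×d} be orthonormal matrices, let W ∈ ℝ^{n×T}, and suppose there is σ̲ > 0 such that ‖W^⊤ U z‖₂ ≥ σ̲ ‖z‖₂ for all z ∈ ℝ^d (i.e., the d-th singular value of P_U W is at least σ̲). Then ⟨−2 P_Û^⊥ P_U Û, −2 P_Û^⊥ P_U W W^⊤ P_U Û⟩_F ≥ σ̲² · ‖2 P_Û^⊥ P_U Û‖_F², i.e., 4 tr(Û^⊤ P_U P_Û^⊥ P_U W W^⊤ P_U Û) ≥ σ̲² · 4 tr(Û^⊤ P_U P_Û^⊥ P_U Û). -/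

import Mathlib

open Matrix

/-- Euclidean norm of a vector. -/
noncomputable def enorm₂ {n : ℕ} (v : Fin n → ℝ) : ℝ :=
  Real.sqrt (∑ i, (v i) ^ 2)

/-- Frobenius norm of a matrix. -/
noncomputable def frob {n m : ℕ} (A : Matrix (Fin n) (Fin m) ℝ) : ℝ :=
  Real.sqrt (Matrix.trace (Aᵀ * A))

/-- Frobenius inner product of two matrices. -/
noncomputable def finner {n m : ℕ} (A B : Matrix (Fin n) (Fin m) ℝ) : ℝ :=
  Matrix.trace (Aᵀ * B)

/-- Trace of `C * S * Cᵀ` is a sum of quadratic forms of the rows of `C`. -/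
lemma trace_conj_nonneg {n d : ℕ} (C : Matrix (Fin n) (Fin d) ℝ) (S : Matrix (Fin d) (Fin d) ℝ)
    (h : ∀ z, 0 ≤ z ⬝ᵥ S.mulVec z) : 0 ≤ Matrix.trace (C * S * Cᵀ) := by
  rw [Matrix.trace]
  apply Finset.sum_nonneg
  intro i _
  have h2 := h (C i)
  have : (C * S * Cᵀ).diag i = (C i) ⬝ᵥ S.mulVec (C i) := by
    simp [Matrix.diag, Matrix.mul_apply, dotProduct, Matrix.mulVec, Finset.mul_sum, Finset.sum_mul]
    rw [Finset.sum_comm]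
    apply Finset.sum_congr rfl; intro k _
    apply Finset.sum_congr rfl; intro j _
    ring
  rw [this]; exact h2

lemma trace_transpose_mul_self_nonneg {n d : ℕ} (A : Matrix (Fin n) (Fin d) ℝ) :
    0 ≤ Matrix.trace (Aᵀ * A) := by
  rw [Matrix.trace]
  apply Finset.sum_nonneg
  intro i _
  simp [Matrix.diag, Matrix.mul_apply]
  apply Finset.sum_nonneg
  intro j _
  exact mul_self_nonneg _

lemma sum_sq_mulVec {n d T : ℕ} (U : Matrix (Fin n) (Fin d) ℝ) (W : Matrix (Fin n) (Fin T) ℝ)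
    (z : Fin d → ℝ) :
    ∑ j, (Wᵀ.mulVec (U.mulVec z)) j ^ 2 = z ⬝ᵥ (Uᵀ * (W * (Wᵀ * U))).mulVec z := by
  have hM : Uᵀ * (W * (Wᵀ * U)) = (Wᵀ * U)ᵀ * (Wᵀ * U) := by
    simp [Matrix.transpose_mul, Matrix.mul_assoc]
  rw [Matrix.mulVec_mulVec, hM]
  set M := Wᵀ * U with hMdef
  have : z ⬝ᵥ (Mᵀ * M).mulVec z = (M.mulVec z) ⬝ᵥ (M.mulVec z) := by
    rw [← Matrix.mulVec_mulVec, Matrix.dotProduct_mulVec, Matrix.vecMul_transpose]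
  rw [this]
  simp [dotProduct, pow_two]

theorem stmt8 {n d T : ℕ} (U Uhat : Matrix (Fin n) (Fin d) ℝ)
    (hU : Uᵀ * U = 1) (hUhat : Uhatᵀ * Uhat = 1)
    (W : Matrix (Fin n) (Fin T) ℝ)
    (σmin : ℝ) (hσ : 0 < σmin)
    (hsv : ∀ z : Fin d → ℝ, σmin * enorm₂ z ≤ enorm₂ (Wᵀ.mulVec (U.mulVec z))) :
    finner ((-2 : ℝ) • ((1 - Uhat * Uhatᵀ) * (U * Uᵀ) * Uhat))
        ((-2 : ℝ) • ((1 - Uhat * Uhatᵀ) * (U * Uᵀ) * W * Wᵀ * (U * Uᵀ) * Uhat))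
      ≥ σmin ^ 2 * frob ((2 : ℝ) • ((1 - Uhat * Uhatᵀ) * (U * Uᵀ) * Uhat)) ^ 2 ∧
    4 * Matrix.trace
        (Uhatᵀ * (U * Uᵀ) * (1 - Uhat * Uhatᵀ) * (U * Uᵀ) * W * Wᵀ * (U * Uᵀ) * Uhat)
      ≥ σmin ^ 2 *
        (4 * Matrix.trace (Uhatᵀ * (U * Uᵀ) * (1 - Uhat * Uhatᵀ) * (U * Uᵀ) * Uhat)) := by
  have hU' : ∀ {k : ℕ} (X : Matrix (Fin d) (Fin k) ℝ), Uᵀ * (U * X) = X := by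
    intro k X; rw [← Matrix.mul_assoc, hU, Matrix.one_mul]
  have hUhat' : ∀ {k : ℕ} (X : Matrix (Fin d) (Fin k) ℝ), Uhatᵀ * (Uhat * X) = X := by
    intro k X; rw [← Matrix.mul_assoc, hUhat, Matrix.one_mul]
  set G : Matrix (Fin d) (Fin d) ℝ := Uᵀ * Uhat with hG
  set S : Matrix (Fin d) (Fin d) ℝ := Uᵀ * (W * (Wᵀ * U)) with hS
  set S' : Matrix (Fin d) (Fin d) ℝ := S - σmin ^ 2 • 1 with hS'
  set C : Matrix (Fin n) (Fin d) ℝ := ((1 - U * Uᵀ) * Uhat) * (Uhatᵀ * U) with hC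
  -- quadratic form of S' is nonnegative
  have hq : ∀ z : Fin d → ℝ, 0 ≤ z ⬝ᵥ S'.mulVec z := by
    intro z
    have h1 := hsv z
    have hz : (0:ℝ) ≤ enorm₂ z := Real.sqrt_nonneg _
    have hw : (0:ℝ) ≤ enorm₂ (Wᵀ.mulVec (U.mulVec z)) := Real.sqrt_nonneg _
    have hsq : (σmin * enorm₂ z) ^ 2 ≤ enorm₂ (Wᵀ.mulVec (U.mulVec z)) ^ 2 := by
      apply pow_le_pow_left₀ (by positivity) h1
    have hz2 : enorm₂ z ^ 2 = ∑ i, (z i) ^ 2 := by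
      rw [enorm₂, Real.sq_sqrt]; positivity
    have hw2 : enorm₂ (Wᵀ.mulVec (U.mulVec z)) ^ 2 = ∑ j, (Wᵀ.mulVec (U.mulVec z)) j ^ 2 := by
      rw [enorm₂, Real.sq_sqrt]; positivity
    have key : σmin ^ 2 * ∑ i, (z i) ^ 2 ≤ z ⬝ᵥ S.mulVec z := by
      rw [hS, ← sum_sq_mulVec U W z, ← hw2, ← hz2]
      calc σmin ^ 2 * enorm₂ z ^ 2 = (σmin * enorm₂ z) ^ 2 := by ring
        _ ≤ _ := hsq
    have hdz : z ⬝ᵥ S'.mulVec z = z ⬝ᵥ S.mulVec z - σmin ^ 2 * ∑ i, (z i) ^ 2 := by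
      rw [hS', Matrix.sub_mulVec, dotProduct_sub, Matrix.smul_mulVec, Matrix.one_mulVec,
        dotProduct_smul, smul_eq_mul]
      congr 1
      simp [dotProduct, pow_two]
    rw [hdz]
    linarith
  -- nonnegativity of the conjugated trace
  have hnn : 0 ≤ Matrix.trace (C * S' * Cᵀ) := trace_conj_nonneg C S' hq
  -- algebraic identities
  have e3 : Cᵀ * C = G * Gᵀ - G * (Gᵀ * (G * Gᵀ)) := by
    simp only [hC, hG, Matrix.transpose_mul, Matrix.transpose_sub, Matrix.transpose_one,
      Matrix.transpose_transpose, Matrix.sub_mul, Matrix.mul_sub, Matrix.one_mul,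
      Matrix.mul_one, Matrix.mul_assoc, hU', hUhat']
    abel
  -- trace identity: trace (C S' Cᵀ) = (a - b) - σ² (c - d)
  have c1 : Matrix.trace (G * Gᵀ * S) = Matrix.trace (Gᵀ * (S * G)) := by
    rw [Matrix.mul_assoc, Matrix.trace_mul_comm]
    simp [Matrix.mul_assoc]
  have c2 : Matrix.trace (G * (Gᵀ * (G * Gᵀ)) * S) =
      Matrix.trace (Gᵀ * (G * (Gᵀ * (S * G)))) := by
    rw [Matrix.mul_assoc, Matrix.trace_mul_comm]
    simp [Matrix.mul_assoc]
  have c3 : Matrix.trace (G * Gᵀ) = Matrix.trace (Gᵀ * G) := Matrix.trace_mul_comm G Gᵀ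
  have c4 : Matrix.trace (G * (Gᵀ * (G * Gᵀ))) = Matrix.trace (Gᵀ * (G * (Gᵀ * G))) := by
    rw [Matrix.trace_mul_comm]
    simp [Matrix.mul_assoc]
  have hmain : Matrix.trace (C * S' * Cᵀ) =
      (Matrix.trace (Gᵀ * (S * G)) - Matrix.trace (Gᵀ * (G * (Gᵀ * (S * G)))))
      - σmin ^ 2 * (Matrix.trace (Gᵀ * G) - Matrix.trace (Gᵀ * (G * (Gᵀ * G)))) := by
    rw [Matrix.trace_mul_comm, ← Matrix.mul_assoc, e3, hS']
    simp only [Matrix.mul_sub, Matrix.sub_mul, Matrix.mul_smul, Matrix.mul_one,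
      Matrix.trace_sub, Matrix.trace_smul, smul_eq_mul]
    rw [c1, c2, c3, c4]
  -- the key inequality
  have key : Matrix.trace (Gᵀ * (S * G)) - Matrix.trace (Gᵀ * (G * (Gᵀ * (S * G))))
      ≥ σmin ^ 2 * (Matrix.trace (Gᵀ * G) - Matrix.trace (Gᵀ * (G * (Gᵀ * G)))) := by
    linarith [hnn, hmain.symm.le, hmain.le]
  -- identify the n-level expressions with the G-level ones
  set A' : Matrix (Fin n) (Fin d) ℝ := (1 - Uhat * Uhatᵀ) * (U * Uᵀ) * Uhat with hA'
  set B' : Matrix (Fin n) (Fin d) ℝ :=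
    (1 - Uhat * Uhatᵀ) * (U * Uᵀ) * W * Wᵀ * (U * Uᵀ) * Uhat with hB'
  have e1 : A'ᵀ * B' = Gᵀ * (S * G) - Gᵀ * (G * (Gᵀ * (S * G))) := by
    simp only [hA', hB', hG, hS, Matrix.transpose_mul, Matrix.transpose_sub,
      Matrix.transpose_one, Matrix.transpose_transpose, Matrix.sub_mul, Matrix.mul_sub,
      Matrix.one_mul, Matrix.mul_one, Matrix.mul_assoc, hU', hUhat']
    abel
  have e2 : A'ᵀ * A' = Gᵀ * G - Gᵀ * (G * (Gᵀ * G)) := by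
    simp only [hA', hG, Matrix.transpose_mul, Matrix.transpose_sub,
      Matrix.transpose_one, Matrix.transpose_transpose, Matrix.sub_mul, Matrix.mul_sub,
      Matrix.one_mul, Matrix.mul_one, Matrix.mul_assoc, hU', hUhat']
    abel
  have e4 : Uhatᵀ * (U * Uᵀ) * (1 - Uhat * Uhatᵀ) * (U * Uᵀ) * W * Wᵀ * (U * Uᵀ) * Uhat
      = Gᵀ * (S * G) - Gᵀ * (G * (Gᵀ * (S * G))) := by
    simp only [hG, hS, Matrix.transpose_mul, Matrix.transpose_sub, Matrix.transpose_one,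
      Matrix.transpose_transpose, Matrix.sub_mul, Matrix.mul_sub, Matrix.one_mul,
      Matrix.mul_one, Matrix.mul_assoc, hU', hUhat']
  have e5 : Uhatᵀ * (U * Uᵀ) * (1 - Uhat * Uhatᵀ) * (U * Uᵀ) * Uhat
      = Gᵀ * G - Gᵀ * (G * (Gᵀ * G)) := by
    simp only [hG, Matrix.transpose_mul, Matrix.transpose_sub, Matrix.transpose_one,
      Matrix.transpose_transpose, Matrix.sub_mul, Matrix.mul_sub, Matrix.one_mul,
      Matrix.mul_one, Matrix.mul_assoc, hU', hUhat']
  constructor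
  · -- first conjunct
    have hfin : finner ((-2 : ℝ) • A') ((-2 : ℝ) • B') = 4 * Matrix.trace (A'ᵀ * B') := by
      have : finner ((-2 : ℝ) • A') ((-2 : ℝ) • B')
          = Matrix.trace (((-2 : ℝ) • A')ᵀ * ((-2 : ℝ) • B')) := rfl
      rw [this, Matrix.transpose_smul, Matrix.smul_mul, Matrix.mul_smul, Matrix.trace_smul,
        Matrix.trace_smul, smul_eq_mul, smul_eq_mul]
      ring
    have htr4 : Matrix.trace (((2 : ℝ) • A')ᵀ * ((2 : ℝ) • A'))
        = 4 * Matrix.trace (A'ᵀ * A') := by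
      rw [Matrix.transpose_smul, Matrix.smul_mul, Matrix.mul_smul, Matrix.trace_smul,
        Matrix.trace_smul, smul_eq_mul, smul_eq_mul]
      ring
    have hfro : frob ((2 : ℝ) • A') ^ 2 = 4 * Matrix.trace (A'ᵀ * A') := by
      have hdef : frob ((2 : ℝ) • A')
          = Real.sqrt (Matrix.trace (((2 : ℝ) • A')ᵀ * ((2 : ℝ) • A'))) := rfl
      rw [hdef, htr4, Real.sq_sqrt]
      have := trace_transpose_mul_self_nonneg A'
      linarith
    rw [hfin, hfro, e1, e2, Matrix.trace_sub, Matrix.trace_sub]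
    nlinarith [key]
  · -- second conjunct
    rw [e4, e5, Matrix.trace_sub, Matrix.trace_sub]
    nlinarith [key]
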